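/- Let A, B, C be nonempty closed convex subsets of a normed space X such that V*_B ∪ V*_C ⊆ V*_A (i.e., every continuous linear functional that is bounded above on B or on C is bounded above on A). Then d_H(cl(A+B), cl(A+C)) = d_H(B,C), where cl(A+B) denotes the closure of the pointwise sum A+B. -/

import Mathlib

open Pointwise

open EMetric in
private lemma aux_infEdist_le
    {X : Type*} [NormedAddCommGroup X] [NormedSpace ℝ X]
    (A B C : Set X)
    (hAne : A.Nonempty) (hCne : C.Nonempty) (hCco : Convex ℝ C)
    (h : ∀ f : X →L[ℝ] ℝ, BddAbove (f '' C) → BddAbove (f '' A))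
    {b : X} (hb : b ∈ B) :
    EMetric.infEdist b C ≤
      EMetric.hausdorffEdist (closure (A + B)) (closure (A + C)) := by
  set r := EMetric.hausdorffEdist (closure (A + B)) (closure (A + C)) with hrdef
  by_contra hlt
  push_neg at hlt
  obtain ⟨c1, hc1r, hc1⟩ := exists_between hlt
  obtain ⟨c2, hc12, hc2⟩ := exists_between hc1
  have hc1t : c1 ≠ ⊤ := hc12.ne_top
  have hc2t : c2 ≠ ⊤ := hc2.ne_top
  set ρ1 := c1.toReal with hρ1def
  set ρ2 := c2.toReal with hρ2def
  have hρ12 : ρ1 < ρ2 := (ENNReal.toReal_lt_toReal hc1t hc2t).mpr hc12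
  have hρ2pos : 0 < ρ2 := lt_of_le_of_lt ENNReal.toReal_nonneg hρ12
  have hdist : ∀ x ∈ C, ρ2 ≤ dist b x := by
    intro x hx
    have h1 : c2 ≤ edist b x := le_trans hc2.le (EMetric.infEdist_le_edist_of_mem hx)
    rw [edist_dist] at h1
    exact (ENNReal.le_ofReal_iff_toReal_le hc2t dist_nonneg).mp h1
  -- separate b from the open convex set C + ball 0 ρ2
  have hUopen : IsOpen (C + Metric.ball (0 : X) ρ2) :=
    Metric.isOpen_ball.add_left
  have hUconv : Convex ℝ (C + Metric.ball (0 : X) ρ2) :=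
    hCco.add (convex_ball 0 ρ2)
  have hbU : b ∉ C + Metric.ball (0 : X) ρ2 := by
    rintro ⟨x, hx, y, hy, rfl⟩
    have h2 := hdist x hx
    have h3 : dist (x + y) x = ‖y‖ := by
      simp [dist_eq_norm]
    rw [h3] at h2
    exact absurd (mem_ball_zero_iff.mp hy) (not_lt.mpr h2)
  obtain ⟨f, hfu⟩ := geometric_hahn_banach_open_point hUconv hUopen hbU
  have hf0 : 0 < ‖f‖ := by
    obtain ⟨x0, hx0⟩ := hCne
    have hx0U : x0 ∈ C + Metric.ball (0 : X) ρ2 :=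
      ⟨x0, hx0, 0, by simpa using hρ2pos, by simp⟩
    have hlt0 := hfu _ hx0U
    have hfne : f ≠ 0 := by
      rintro rfl
      simp at hlt0
    exact norm_pos_iff.mpr hfne
  have hkey : ∀ x ∈ C, f x + ρ2 * ‖f‖ ≤ f b := by
    intro x hx
    by_contra hcon
    push_neg at hcon
    have h1 : (f b - f x) / ρ2 < ‖f‖ := by
      rw [div_lt_iff₀ hρ2pos]; nlinarith
    obtain ⟨y, hy1, hy2⟩ := f.exists_lt_apply_of_lt_opNorm h1
    rw [Real.norm_eq_abs] at hy2
    rcases abs_cases (f y) with ⟨heq, _⟩ | ⟨heq, _⟩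
    · have hmem : x + ρ2 • y ∈ C + Metric.ball (0 : X) ρ2 := by
        refine ⟨x, hx, ρ2 • y, ?_, rfl⟩
        rw [mem_ball_zero_iff, norm_smul, Real.norm_eq_abs, abs_of_pos hρ2pos]
        nlinarith
      have := hfu _ hmem
      rw [map_add, map_smul] at this
      rw [heq] at hy2
      have : f b - f x < ρ2 * f y := by
        calc f b - f x = ((f b - f x) / ρ2) * ρ2 := by field_simp
          _ < f y * ρ2 := by nlinarith
          _ = ρ2 * f y := by ring
      simp only [smul_eq_mul] at *
      have h4 := hfu _ hmem
      rw [map_add, map_smul, smul_eq_mul] at h4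
      linarith
    · have hmem : x + ρ2 • (-y) ∈ C + Metric.ball (0 : X) ρ2 := by
        refine ⟨x, hx, ρ2 • (-y), ?_, rfl⟩
        rw [mem_ball_zero_iff, norm_smul, Real.norm_eq_abs, abs_of_pos hρ2pos, norm_neg]
        nlinarith
      rw [heq] at hy2
      have h4 := hfu _ hmem
      rw [map_add, map_smul, map_neg, smul_eq_mul] at h4
      have h5 : f b - f x < ρ2 * (-(f y)) := by
        calc f b - f x = ((f b - f x) / ρ2) * ρ2 := by field_simp
          _ < (-(f y)) * ρ2 := by nlinarith
          _ = ρ2 * (-(f y)) := by ring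
      linarith
  have hCbdd : BddAbove (f '' C) := by
    refine ⟨f b - ρ2 * ‖f‖, ?_⟩
    rintro _ ⟨x, hx, rfl⟩
    linarith [hkey x hx]
  have hAbdd := h f hCbdd
  set MA := sSup (f '' A) with hMAdef
  set MC := sSup (f '' C) with hMCdef
  have hc1eq : c1 = ENNReal.ofReal ρ1 := (ENNReal.ofReal_toReal hc1t).symm
  have hmain : ∀ a ∈ A, f a + f b ≤ MA + MC + ρ1 * ‖f‖ := by
    intro a ha
    have hmem : a + b ∈ closure (A + B) := subset_closure ⟨a, ha, b, hb, rfl⟩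
    have h1 : EMetric.infEdist (a + b) (A + C) < c1 := by
      calc EMetric.infEdist (a + b) (A + C)
          = EMetric.infEdist (a + b) (closure (A + C)) := EMetric.infEdist_closure.symm
        _ ≤ r := EMetric.infEdist_le_hausdorffEdist_of_mem hmem
        _ < c1 := hc1r
    obtain ⟨w, hw, hwd⟩ := EMetric.infEdist_lt_iff.mp h1
    obtain ⟨a', ha', x, hx, rfl⟩ := hw
    rw [hc1eq] at hwd
    have hd : dist (a + b) (a' + x) < ρ1 := edist_lt_ofReal.mp hwd
    have hfd : f (a + b) - f (a' + x) ≤ ‖f‖ * ρ1 := by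
      have h2 : f (a + b) - f (a' + x) ≤ ‖f ((a + b) - (a' + x))‖ := by
        rw [map_sub]
        exact le_abs_self _
      have h3 := f.le_opNorm ((a + b) - (a' + x))
      have h4 : ‖(a + b) - (a' + x)‖ = dist (a + b) (a' + x) := (dist_eq_norm _ _).symm
      calc f (a + b) - f (a' + x) ≤ ‖f‖ * ‖(a + b) - (a' + x)‖ := le_trans h2 h3
        _ ≤ ‖f‖ * ρ1 := by rw [h4]; exact mul_le_mul_of_nonneg_left hd.le (norm_nonneg f)
    have hMA : f a' ≤ MA := le_csSup hAbdd ⟨a', ha', rfl⟩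
    have hMC : f x ≤ MC := le_csSup hCbdd ⟨x, hx, rfl⟩
    rw [map_add, map_add] at hfd
    linarith
  have hMAle : MA ≤ MA + MC + ρ1 * ‖f‖ - f b := by
    refine csSup_le (hAne.image f) ?_
    rintro _ ⟨a, ha, rfl⟩
    linarith [hmain a ha]
  have hfb : MC + ρ2 * ‖f‖ ≤ f b := by
    have h5 : MC ≤ f b - ρ2 * ‖f‖ := by
      refine csSup_le (hCne.image f) ?_
      rintro _ ⟨x, hx, rfl⟩
      linarith [hkey x hx]
    linarith
  nlinarith

/-- If `A, B, C` are nonempty closed convex subsets of a normed space such that every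
continuous linear functional bounded above on `B` or on `C` is bounded above on `A`
(i.e. `V*_B ∪ V*_C ⊆ V*_A`), then `d_H(cl(A+B), cl(A+C)) = d_H(B, C)`. -/
theorem hausdorffEdist_add_cancel
    {X : Type*} [NormedAddCommGroup X] [NormedSpace ℝ X]
    (A B C : Set X)
    (hAne : A.Nonempty) (hBne : B.Nonempty) (hCne : C.Nonempty)
    (hAcl : IsClosed A) (hBcl : IsClosed B) (hCcl : IsClosed C)
    (hAco : Convex ℝ A) (hBco : Convex ℝ B) (hCco : Convex ℝ C)
    (h : ∀ f : X →L[ℝ] ℝ, BddAbove (f '' B) ∨ BddAbove (f '' C) → BddAbove (f '' A)) :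
    EMetric.hausdorffEdist (closure (A + B)) (closure (A + C)) =
      EMetric.hausdorffEdist B C := by
  apply le_antisymm
  · unfold EMetric.hausdorffEdist; rw [EMetric.hausdorffEdist_closure]
    apply EMetric.hausdorffEdist_le_of_infEdist
    · rintro _ ⟨a, ha, b, hb, rfl⟩
      refine le_trans ?_ (EMetric.infEdist_le_hausdorffEdist_of_mem (s := B) hb)
      rw [Metric.infEDist]
      refine le_iInf₂ fun y hy => ?_
      calc EMetric.infEdist (a + b) (A + C) ≤ edist (a + b) (a + y) :=
            EMetric.infEdist_le_edist_of_mem ⟨a, ha, y, hy, rfl⟩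
        _ = edist b y := edist_add_left a b y
    · rintro _ ⟨a, ha, c, hc, rfl⟩
      rw [EMetric.hausdorffEdist_comm]
      refine le_trans ?_ (EMetric.infEdist_le_hausdorffEdist_of_mem (s := C) hc)
      rw [Metric.infEDist]
      refine le_iInf₂ fun y hy => ?_
      calc EMetric.infEdist (a + c) (A + B) ≤ edist (a + c) (a + y) :=
            EMetric.infEdist_le_edist_of_mem ⟨a, ha, y, hy, rfl⟩
        _ = edist c y := edist_add_left a c y
  · apply EMetric.hausdorffEdist_le_of_infEdist
    · intro b hb
      exact aux_infEdist_le A B C hAne hCne hCco (fun f hf => h f (Or.inr hf)) hb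
    · intro c hc
      unfold EMetric.hausdorffEdist; rw [EMetric.hausdorffEdist_comm]
      exact aux_infEdist_le A C B hAne hBne hBco (fun f hf => h f (Or.inl hf)) hc
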